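/- Let h(ε) = 1 - ε·α_GW - (1-ε)·(2 arccos(-ε))/(π(1+ε)) with α_GW = 0.878. Then h(0) = 0, h(ε) ≤ 1 - α_GW for all ε ∈ [0, 0.689], and h(ε) = O(ε) as ε → 0⁺ (i.e., there exists K with h(ε) ≤ K ε on [0, 1/2]). -/

import Mathlib

open Real

lemma aux_nonneg' {f f' : ℝ → ℝ} (hd : ∀ x, HasDerivAt f (f' x) x)
    (h0 : f 0 = 0) (hf' : ∀ x, 0 ≤ x → 0 ≤ f' x) {x : ℝ} (hx : 0 ≤ x) : 0 ≤ f x := by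
  have hmono : MonotoneOn f (Set.Ici 0) := by
    apply monotoneOn_of_deriv_nonneg (convex_Ici 0)
    · exact fun y _ => (hd y).continuousAt.continuousWithinAt
    · exact fun y _ => (hd y).differentiableAt.differentiableWithinAt
    · intro y hy
      rw [(hd y).deriv]
      exact hf' y (le_of_lt (by simpa using hy))
  simpa [h0] using hmono Set.self_mem_Ici hx hx

lemma sin_ge_poly' {x : ℝ} (hx : 0 ≤ x) : x - x^3/6 ≤ sin x := by
  have := aux_nonneg' (f := fun y => Real.sin y - (y - y^3/6))
    (f' := fun y => Real.cos y - (1 - y^2/2)) ?_ (by norm_num) ?_ hx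
  · linarith [this]
  · intro y
    have h := (Real.hasDerivAt_sin y).sub ((hasDerivAt_id y).sub ((hasDerivAt_pow 3 y).div_const 6))
    exact h.congr_deriv (by norm_num; ring)
  · intro y _
    have := Real.one_sub_sq_div_two_le_cos (x := y)
    linarith

lemma cos_le_poly' {x : ℝ} (hx : 0 ≤ x) : cos x ≤ 1 - x^2/2 + x^4/24 := by
  have := aux_nonneg' (f := fun y => 1 - y^2/2 + y^4/24 - Real.cos y)
    (f' := fun y => Real.sin y - (y - y^3/6)) ?_ (by norm_num) ?_ hx
  · linarith [this]
  · intro y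
    have h := ((((hasDerivAt_const y (1:ℝ)).sub ((hasDerivAt_pow 2 y).div_const 2)).add
      ((hasDerivAt_pow 4 y).div_const 24)).sub (Real.hasDerivAt_cos y))
    exact h.congr_deriv (by norm_num; ring)
  · intro y hy
    linarith [sin_ge_poly' hy]

lemma sin_le_poly' {x : ℝ} (hx : 0 ≤ x) : sin x ≤ x - x^3/6 + x^5/120 := by
  have := aux_nonneg' (f := fun y => y - y^3/6 + y^5/120 - Real.sin y)
    (f' := fun y => 1 - y^2/2 + y^4/24 - Real.cos y) ?_ (by norm_num) ?_ hx
  · linarith [this]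
  · intro y
    have h := ((((hasDerivAt_id y).sub ((hasDerivAt_pow 3 y).div_const 6)).add
      ((hasDerivAt_pow 5 y).div_const 120)).sub (Real.hasDerivAt_sin y))
    exact h.congr_deriv (by norm_num; ring)
  · intro y hy
    linarith [cos_le_poly' hy]

lemma quintic_step' {u : ℝ} (hu0 : 0 < u) (hub : u ≤ 0.75861) :
    1.379159327 * (u - u^3/6 + u^5/120) ≤ u + 0.191637112 := by
  have h : (0:ℝ) ≤ 0.75861 - u := by linarith
  nlinarith [mul_nonneg h (sq_nonneg u), mul_nonneg h (sq_nonneg (u - 0.75861)),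
    mul_nonneg h (sq_nonneg (u + 0.75861)), mul_nonneg (mul_nonneg h h) h,
    mul_nonneg (mul_nonneg h hu0.le) (sq_nonneg u), mul_nonneg (mul_nonneg h h) (sq_nonneg u),
    mul_nonneg (mul_nonneg (mul_nonneg h h) h) h, sq_nonneg (u*u - 0.578)]

lemma key_gw' {ε : ℝ} (h0 : 0 ≤ ε) (h1 : ε ≤ 0.689) :
    0.878 * (π * (1 + ε)) ≤ 2 * arccos (-ε) := by
  set θ : ℝ := 0.439 * (π * (1 + ε)) with hθ
  clear_value θ
  have hpi := Real.pi_pos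
  have hpiu := Real.pi_lt_d6
  have hpil := Real.pi_gt_d6
  have hθ0 : 0 ≤ θ := by nlinarith
  have hθπ : θ ≤ π := by nlinarith
  have hcos : -ε ≤ cos θ := by
    have hrw : cos θ = -sin (θ - π/2) := by
      rw [← Real.sin_pi_div_two_sub θ, show π/2 - θ = -(θ - π/2) by ring, Real.sin_neg]
    rw [hrw]
    rcases le_or_gt (θ - π/2) 0 with hu | hu
    · have hs : sin (θ - π/2) ≤ 0 :=
        Real.sin_nonpos_of_nonpos_of_neg_pi_le hu (by nlinarith)
      linarith
    · set u : ℝ := θ - π/2 with hud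
      clear_value u
      have hub : u ≤ 0.75861 := by nlinarith
      have hq := sin_le_poly' hu.le
      have hstep := quintic_step' hu hub
      have hqε : u - u^3/6 + u^5/120 ≤ ε := by
        have hA : 0.439 * π * (u - u^3/6 + u^5/120) ≤ u + 0.061 * π := by
          have hqnn : 0 ≤ u - u^3/6 + u^5/120 := by
            nlinarith [mul_nonneg (mul_nonneg hu.le (sub_nonneg.mpr hub)) (add_nonneg (by norm_num : (0:ℝ) ≤ 0.75861) hu.le), mul_nonneg (mul_nonneg hu.le (sq_nonneg u)) (sq_nonneg u)]
          nlinarith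
        have hB : u + 0.061 * π = 0.439 * π * ε := by
          rw [hud, hθ]; ring
        have hC : 0.439 * π * (u - u^3/6 + u^5/120) ≤ 0.439 * π * ε := by linarith
        have hD : (0:ℝ) < 0.439 * π := by positivity
        exact le_of_mul_le_mul_left hC hD
      linarith
  have hc1 : arccos (cos θ) = θ := Real.arccos_cos hθ0 hθπ
  have hc2 : θ ≤ arccos (-ε) := by
    rw [← hc1]
    have harc := Real.monotone_arcsin hcos
    rw [Real.arccos, Real.arccos]
    linarith
  have : 2 * θ = 0.878 * (π * (1 + ε)) := by rw [hθ]; ring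
  linarith

/-- The deficiency function `h(ε) = 1 - ε α_GW - (1-ε) (2 arccos (-ε))/(π (1+ε))`
with `α_GW = 0.878` satisfies `h 0 = 0`, `h ε ≤ 1 - α_GW` on `[0, 0.689]`, and
`h(ε) = O(ε)`: there is `K` with `h ε ≤ K ε` on `[0, 1/2]`. -/
theorem stmt_16 :
    (1 - 0 * 0.878 - (1 - 0) * (2 * arccos (-(0 : ℝ))) / (π * (1 + 0)) = 0) ∧
      (∀ ε ∈ Set.Icc (0 : ℝ) 0.689,
        1 - ε * 0.878 - (1 - ε) * (2 * arccos (-ε)) / (π * (1 + ε)) ≤ 1 - 0.878) ∧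
      ∃ K : ℝ, ∀ ε ∈ Set.Icc (0 : ℝ) (1 / 2),
        1 - ε * 0.878 - (1 - ε) * (2 * arccos (-ε)) / (π * (1 + ε)) ≤ K * ε := by
  have hpi := Real.pi_pos
  refine ⟨?_, ?_, ?_⟩
  · rw [neg_zero, Real.arccos_zero]
    field_simp
    norm_num
  · rintro ε ⟨h0, h1⟩
    have hC : (0:ℝ) < π * (1 + ε) := by nlinarith
    have hkey := key_gw' h0 h1
    have hX : (0.878 - 0.878 * ε) * (π * (1 + ε)) ≤ (1 - ε) * (2 * arccos (-ε)) := by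
      have := mul_le_mul_of_nonneg_left hkey (by linarith : (0:ℝ) ≤ 1 - ε)
      nlinarith
    have h2 : (0.878 - 0.878 * ε) ≤ (1 - ε) * (2 * arccos (-ε)) / (π * (1 + ε)) :=
      (le_div_iff₀ hC).mpr hX
    linarith
  · refine ⟨2, ?_⟩
    rintro ε ⟨h0, h1⟩
    have hC : (0:ℝ) < π * (1 + ε) := by nlinarith
    have harc : π/2 ≤ arccos (-ε) := by
      have : arcsin (-ε) ≤ 0 := Real.arcsin_nonpos.mpr (by linarith)
      rw [Real.arccos]
      linarith
    have hX : (1 - ε * 0.878 - 2 * ε) * (π * (1 + ε)) ≤ (1 - ε) * (2 * arccos (-ε)) := by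
      have := mul_le_mul_of_nonneg_left harc (by linarith : (0:ℝ) ≤ 1 - ε)
      nlinarith [mul_nonneg h0 hpi.le, mul_nonneg (mul_nonneg h0 h0) hpi.le]
    have h2 : (1 - ε * 0.878 - 2 * ε) ≤ (1 - ε) * (2 * arccos (-ε)) / (π * (1 + ε)) :=
      (le_div_iff₀ hC).mpr hX
    linarith
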